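/- Let G be a finite directed multigraph with vertex set T, and let T' ⊆ T be a nonempty subset of vertices such that from every vertex t ∈ T' there exist at least two distinct directed paths of the same length ending at vertices of T'. Then there exists a vertex t ∈ T' and a positive integer n such that there are at least two distinct directed closed paths (cycles) of length n based at t. -/

import Mathlib

/-- `IsWalk src tgt a b p` : the list of edges `p` forms a directed path from `a` to `b`
in the directed multigraph with source and target maps `src`, `tgt`. -/
def IsWalk {V E : Type*} (src tgt : E → V) : V → V → List E → Prop
  | a, b, [] => a = b
  | a, b, e :: p => src e = a ∧ IsWalk src tgt (tgt e) b p

theorem isWalk_append {V E : Type*} (src tgt : E → V) {a b c : V} :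
    ∀ {p q : List E}, IsWalk src tgt a b p → IsWalk src tgt b c q →
      IsWalk src tgt a c (p ++ q) := by
  intro p
  induction p generalizing a with
  | nil =>
    intro q h hq
    have hab : a = b := h
    subst hab
    simpa using hq
  | cons e p ih =>
    intro q h hq
    obtain ⟨he, hw⟩ := h
    exact ⟨he, ih hw hq⟩

/-- Binary tree of walks: at vertex `t` choose branch `p t` (to `u t`) or `q t` (to `v t`). -/
def treeWalk {V E : Type*} (p q : V → List E) (u v : V → V) : V → List Bool → List E
  | _, [] => []
  | t, b :: c => (if b then p t else q t) ++ treeWalk p q u v (if b then u t else v t) c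

/-- Endpoint of a tree walk. -/
def treeEnd {V : Type*} (u v : V → V) : V → List Bool → V
  | t, [] => t
  | t, b :: c => treeEnd u v (if b then u t else v t) c

/-- Chain of walks following `P` along the vertex map `X`. -/
def chainW {V E : Type*} (P : V → List E) (X : V → V) : V → ℕ → List E
  | _, 0 => []
  | t, m + 1 => P t ++ chainW P X (X t) m

/-- In a finite directed multigraph, if from every vertex of a nonempty set `T'` there are two
distinct directed paths of the same length ending in `T'`, then some vertex of `T'` carries two
distinct directed cycles of the same (positive) length. -/
theorem stmt_11 {V E : Type*} [Finite V] [Finite E] (src tgt : E → V)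
    (T' : Set V) (hne : T'.Nonempty)
    (hyp : ∀ t ∈ T', ∃ (p q : List E) (u v : V), u ∈ T' ∧ v ∈ T' ∧
      IsWalk src tgt t u p ∧ IsWalk src tgt t v q ∧ p.length = q.length ∧ p ≠ q) :
    ∃ t ∈ T', ∃ n : ℕ, 0 < n ∧ ∃ p q : List E,
      IsWalk src tgt t t p ∧ IsWalk src tgt t t q ∧
      p.length = n ∧ q.length = n ∧ p ≠ q := by
  classical
  have _instV := Fintype.ofFinite V
  obtain ⟨t₀, ht₀⟩ := hne
  -- Choice functions from the hypothesis
  have hyp' : ∀ t : V, ∃ (p q : List E) (u v : V), t ∈ T' →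
      (u ∈ T' ∧ v ∈ T' ∧ IsWalk src tgt t u p ∧ IsWalk src tgt t v q ∧
        p.length = q.length ∧ p ≠ q) := by
    intro t
    by_cases ht : t ∈ T'
    · obtain ⟨p, q, u, v, h⟩ := hyp t ht
      exact ⟨p, q, u, v, fun _ => h⟩
    · exact ⟨[], [], t, t, fun h => absurd h ht⟩
  choose p q u v hpq using hyp'
  -- the tree of walks is made of genuine walks ending in T'
  have htree : ∀ (c : List Bool) (t : V), t ∈ T' →
      IsWalk src tgt t (treeEnd u v t c) (treeWalk p q u v t c) ∧ treeEnd u v t c ∈ T' := by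
    intro c
    induction c with
    | nil =>
      intro t ht
      exact ⟨rfl, ht⟩
    | cons b c ih =>
      intro t ht
      obtain ⟨hu, hv, hwp, hwq, _, _⟩ := hpq t ht
      cases b with
      | true =>
        have h := ih (u t) hu
        refine ⟨?_, by simpa [treeEnd] using h.2⟩
        simpa [treeWalk, treeEnd] using isWalk_append src tgt hwp h.1
      | false =>
        have h := ih (v t) hv
        refine ⟨?_, by simpa [treeEnd] using h.2⟩
        simpa [treeWalk, treeEnd] using isWalk_append src tgt hwq h.1
  -- length bound on tree walks
  set B : ℕ := Finset.univ.sup fun t : V => max (p t).length (q t).length with hB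
  have hble : ∀ t : V, (p t).length ≤ B ∧ (q t).length ≤ B := by
    intro t
    have := Finset.le_sup (f := fun t : V => max (p t).length (q t).length)
      (Finset.mem_univ t)
    exact ⟨le_trans (le_max_left _ _) this, le_trans (le_max_right _ _) this⟩
  have htlen : ∀ (c : List Bool) (t : V),
      (treeWalk p q u v t c).length ≤ B * c.length := by
    intro c
    induction c with
    | nil => intro t; simp [treeWalk]
    | cons b c ih =>
      intro t
      have h1 : (if b then p t else q t).length ≤ B := by
        cases b <;> simp [hble t]
      have h2 := ih (if b then u t else v t)
      simp only [treeWalk, List.length_append]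
      calc (if b then p t else q t).length + (treeWalk p q u v (if b then u t else v t) c).length
          ≤ B + B * c.length := Nat.add_le_add h1 h2
        _ = B * (c.length + 1) := by ring
        _ = B * (b :: c).length := by simp
  -- injectivity of the tree of walks
  have htinj : ∀ (c c' : List Bool) (t : V), t ∈ T' → c.length = c'.length →
      treeWalk p q u v t c = treeWalk p q u v t c' → c = c' := by
    intro c
    induction c with
    | nil =>
      intro c' t _ hl _
      exact (List.length_eq_zero_iff.mp hl.symm).symm
    | cons b c ih =>
      intro c' t ht hl hw
      cases c' with
      | nil => simp at hl
      | cons b' c'' =>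
        obtain ⟨hu, hv, hwp, hwq, hlen, hne'⟩ := hpq t ht
        by_cases hb : b = b'
        · subst hb
          have hw' : treeWalk p q u v (if b then u t else v t) c
              = treeWalk p q u v (if b then u t else v t) c'' := by
            have := hw
            simp only [treeWalk] at this
            exact List.append_cancel_left this
          have hl' : c.length = c''.length := by simpa using hl
          have hmem : (if b then u t else v t) ∈ T' := by cases b <;> simp [hu, hv]
          rw [ih c'' _ hmem hl' hw']
        · exfalso
          cases b <;> cases b'
          · exact hb rfl
          · simp only [treeWalk] at hw
            simp at hw
            exact hne' ((List.append_inj hw hlen.symm).1).symm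
          · simp only [treeWalk] at hw
            simp at hw
            exact hne' (List.append_inj hw hlen).1
          · exact hb rfl
  -- Step A: from every vertex of T' there are two distinct equal-length walks
  -- with the SAME endpoint in T'.
  have stepA : ∀ t, t ∈ T' → ∃ x, x ∈ T' ∧ ∃ P Q : List E,
      IsWalk src tgt t x P ∧ IsWalk src tgt t x Q ∧ P.length = Q.length ∧ P ≠ Q := by
    intro t ht
    set cV : ℕ := Fintype.card V with hcV
    set M : ℕ := (B + 1) * (cV + 1) with hM
    set k : ℕ := 3 * M with hk
    have hM1 : 1 ≤ M := by rw [hM]; exact Nat.mul_pos (Nat.succ_pos B) (Nat.succ_pos cV)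
    have hcard : Fintype.card (Fin (B * k + 1) × V) < Fintype.card (Fin k → Bool) := by
      have h1 : (B * k + 1) * cV ≤ 3 * M * M := by
        calc (B * k + 1) * cV ≤ (B * k + k) * cV := by
              have : 1 ≤ k := by omega
              exact Nat.mul_le_mul_right _ (by omega)
          _ = k * (B + 1) * cV := by ring
          _ ≤ k * (B + 1) * (cV + 1) := Nat.mul_le_mul_left _ (by omega)
          _ = 3 * M * M := by rw [hk, hM]; ring
      have h2 : 3 * M * M < (M + 1) ^ 3 := by
        have e : (M + 1) ^ 3 = M ^ 3 + 3 * (M * M) + 3 * M + 1 := by ring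
        rw [e]
        nlinarith [Nat.zero_le (M ^ 3)]
      have h3 : (M + 1) ^ 3 ≤ 2 ^ k := by
        calc (M + 1) ^ 3 ≤ (2 ^ M) ^ 3 := Nat.pow_le_pow_left ((Nat.lt_two_pow_self (n := M))) 3
          _ = 2 ^ k := by rw [← pow_mul, hk]; ring_nf
      simp only [Fintype.card_prod, Fintype.card_fin, Fintype.card_fun, Fintype.card_bool,
        Fintype.card_fin]
      exact lt_of_le_of_lt h1 (lt_of_lt_of_le h2 h3)
    obtain ⟨f₁, f₂, hf12, heq⟩ := Fintype.exists_ne_map_eq_of_card_lt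
      (fun f : Fin k → Bool =>
        ((⟨(treeWalk p q u v t (List.ofFn f)).length, by
            have := htlen (List.ofFn f) t
            simp only [List.length_ofFn] at this
            omega⟩ : Fin (B * k + 1)), treeEnd u v t (List.ofFn f))) hcard
    have hlen12 : (treeWalk p q u v t (List.ofFn f₁)).length
        = (treeWalk p q u v t (List.ofFn f₂)).length := by
      have := congrArg (fun x => (x.1 : ℕ)) heq
      simpa using this
    have hend12 : treeEnd u v t (List.ofFn f₁) = treeEnd u v t (List.ofFn f₂) := by
      have := congrArg Prod.snd heq
      simpa using this
    have hne12 : treeWalk p q u v t (List.ofFn f₁) ≠ treeWalk p q u v t (List.ofFn f₂) := by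
      intro h
      apply hf12
      have := htinj (List.ofFn f₁) (List.ofFn f₂) t ht (by simp) h
      exact List.ofFn_injective this
    obtain ⟨hw1, hmem1⟩ := htree (List.ofFn f₁) t ht
    obtain ⟨hw2, _⟩ := htree (List.ofFn f₂) t ht
    rw [← hend12] at hw2
    exact ⟨treeEnd u v t (List.ofFn f₁), hmem1, _, _, hw1, hw2, hlen12, hne12⟩
  -- Choice functions for step A
  have stepA' : ∀ t : V, ∃ (x : V) (P Q : List E), t ∈ T' →
      (x ∈ T' ∧ IsWalk src tgt t x P ∧ IsWalk src tgt t x Q ∧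
        P.length = Q.length ∧ P ≠ Q) := by
    intro t
    by_cases ht : t ∈ T'
    · obtain ⟨x, hx, P, Q, h⟩ := stepA t ht
      exact ⟨x, P, Q, fun _ => ⟨hx, h⟩⟩
    · exact ⟨t, [], [], fun h => absurd h ht⟩
  choose X Pf Qf hX using stepA'
  -- the chain of vertices
  set seq : ℕ → V := fun n => X^[n] t₀ with hseqdef
  have hseqsucc : ∀ n, seq (n + 1) = X (seq n) := by
    intro n
    simp [hseqdef, Function.iterate_succ_apply']
  have hseqmem : ∀ n, seq n ∈ T' := by
    intro n
    induction n with
    | zero => exact ht₀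
    | succ n ih =>
      rw [hseqsucc]
      exact (hX (seq n) ih).1
  have hseqadd : ∀ a b, X^[a] (seq b) = seq (b + a) := by
    intro a b
    simp [hseqdef, ← Function.iterate_add_apply, Nat.add_comm]
  -- chain walks are walks
  have hchain : ∀ (m : ℕ) (s : V), s ∈ T' →
      IsWalk src tgt s (X^[m] s) (chainW Pf X s m) := by
    intro m
    induction m with
    | zero => intro s _; exact rfl
    | succ m ih =>
      intro s hs
      obtain ⟨hXs, hwP, _, _, _⟩ := hX s hs
      have := isWalk_append src tgt hwP (ih (X s) hXs)
      simpa [chainW, Function.iterate_succ_apply] using this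
  have hchain_snoc : ∀ (m : ℕ) (s : V),
      chainW Pf X s (m + 1) = chainW Pf X s m ++ Pf (X^[m] s) := by
    intro m
    induction m with
    | zero => intro s; simp [chainW]
    | succ m ih =>
      intro s
      calc chainW Pf X s (m + 1 + 1) = Pf s ++ chainW Pf X (X s) (m + 1) := rfl
        _ = Pf s ++ (chainW Pf X (X s) m ++ Pf (X^[m] (X s))) := by rw [ih]
        _ = (Pf s ++ chainW Pf X (X s) m) ++ Pf (X^[m + 1] s) := by
              rw [List.append_assoc, Function.iterate_succ_apply]
        _ = chainW Pf X s (m + 1) ++ Pf (X^[m + 1] s) := rfl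
  -- pigeonhole on the chain
  have hpig : ∃ i j : ℕ, i < j ∧ seq i = seq j := by
    obtain ⟨i, j, hne', heq⟩ := Finite.exists_ne_map_eq_of_infinite seq
    rcases hne'.lt_or_gt with h | h
    · exact ⟨i, j, h, heq⟩
    · exact ⟨j, i, h, heq.symm⟩
  obtain ⟨i, j, hij, hijeq⟩ := hpig
  set m : ℕ := j - i - 1 with hm
  have hj : i + m + 1 = j := by omega
  set y : V := seq (i + m) with hy
  obtain ⟨hyT, hwPy, hwQy, hlenPQ, hnePQ⟩ := hX y (hseqmem (i + m))
  -- the two cycles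
  set R : List E := chainW Pf X (seq i) (m + 1) with hR
  set R' : List E := chainW Pf X (seq i) m ++ Qf y with hR'
  have hRsnoc : R = chainW Pf X (seq i) m ++ Pf y := by
    rw [hR, hchain_snoc, hseqadd]
  have hXy : X y = seq i := by
    have : X y = seq (i + m + 1) := (hseqsucc (i + m)).symm
    rw [this, hj, ← hijeq]
  -- R is a cycle at seq i
  have hwR : IsWalk src tgt (seq i) (seq i) R := by
    have := hchain (m + 1) (seq i) (hseqmem i)
    rwa [hseqadd, show i + (m + 1) = j from by omega, ← hijeq] at this
  -- R' is a cycle at seq i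
  have hwR' : IsWalk src tgt (seq i) (seq i) R' := by
    have hw1 : IsWalk src tgt (seq i) y (chainW Pf X (seq i) m) := by
      have := hchain m (seq i) (hseqmem i)
      rwa [hseqadd] at this
    have hw2 : IsWalk src tgt y (seq i) (Qf y) := by rwa [hXy] at hwQy
    exact isWalk_append src tgt hw1 hw2
  have hlenR : R.length = R'.length := by
    rw [hRsnoc, hR']
    simp [hlenPQ]
  have hneR : R ≠ R' := by
    rw [hRsnoc, hR']
    intro h
    exact hnePQ (List.append_cancel_left h)
  have hRpos : 0 < R.length := by
    rw [hR]
    show 0 < (Pf (seq i) ++ chainW Pf X (X (seq i)) m).length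
    obtain ⟨_, _, _, hlen', hne''⟩ := hX (seq i) (hseqmem i)
    have : Pf (seq i) ≠ [] := by
      intro h
      apply hne''
      rw [h]
      have : (Qf (seq i)).length = 0 := by rw [← hlen', h]; rfl
      exact (List.length_eq_zero_iff.mp this).symm
    have hlp : 0 < (Pf (seq i)).length := List.length_pos_iff.mpr this
    simp only [List.length_append]
    omega
  exact ⟨seq i, hseqmem i, R.length, hRpos, R, R', hwR, hwR', rfl, hlenR.symm, hneR⟩
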